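/- arXiv:2410.10025 — 3 statements merged into one kernel-verified Lean document; each statement's English description precedes it below -/
import Mathlib

section
/- Let n, p, q ≥ 1 be integers, Y ∈ ℝ^{n×q}, X ∈ ℝ^{n×p}, B ∈ ℝ^{p×q}, θ ∈ [0,1), and η₁,…,η_q > 0. Let Ω be the inverse of Σ = diag(η_i) [(1−θ)·I_q + θ·1_q 1_qᵀ] diag(η_i). Then tr[(1/n)(Y−XB)ᵀ(Y−XB)·Ω] − log det(Ω) = (1/(n(1−θ)))·‖(Y−XB)·diag(η_i⁻¹)‖_F² − (θ/(n(1−θ)(1−θ+qθ)))·‖(Y−XB)·diag(η_i⁻¹)·1_q‖² + (q−1)·log(1−θ) + log(1+(q−1)θ) + 2·∑_{i=1}^q log(η_i). -/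
open Matrix

section Aux
variable (q : ℕ)

private lemma JmulJ :
    (Matrix.of (fun _ _ => (1:ℝ)) : Matrix (Fin q) (Fin q) ℝ) *
      Matrix.of (fun _ _ => (1:ℝ)) = (q:ℝ) • Matrix.of (fun _ _ => (1:ℝ)) := by
  ext i j
  simp [Matrix.mul_apply]

private lemma CmulCinv (θ : ℝ) (hθ1 : θ < 1) (hc : 1 - θ + (q:ℝ) * θ ≠ 0) :
    ((1 - θ) • (1 : Matrix (Fin q) (Fin q) ℝ) + θ • Matrix.of (fun _ _ => (1:ℝ))) *
      ((1 - θ)⁻¹ • 1 + (-(θ / ((1 - θ) * (1 - θ + (q:ℝ) * θ)))) • Matrix.of (fun _ _ => (1:ℝ)))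
      = 1 := by
  have h1 : (1 : ℝ) - θ ≠ 0 := (by linarith : (0:ℝ) < 1 - θ).ne'
  set J : Matrix (Fin q) (Fin q) ℝ := Matrix.of (fun _ _ => (1:ℝ)) with hJ
  set b : ℝ := -(θ / ((1 - θ) * (1 - θ + (q:ℝ) * θ))) with hb
  have expand : ((1 - θ) • (1 : Matrix (Fin q) (Fin q) ℝ) + θ • J) *
      ((1 - θ)⁻¹ • 1 + b • J)
      = ((1 - θ) * (1 - θ)⁻¹) • 1 + ((1 - θ) * b + θ * (1 - θ)⁻¹ + θ * b * q) • J := by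
    rw [add_mul, mul_add, mul_add, Matrix.smul_mul, Matrix.smul_mul, Matrix.smul_mul,
      Matrix.smul_mul, Matrix.mul_smul, Matrix.mul_smul, Matrix.mul_smul, Matrix.mul_smul,
      one_mul, mul_one, Matrix.one_mul, JmulJ]
    rw [smul_smul, smul_smul, smul_smul, smul_smul]
    module
  rw [expand, mul_inv_cancel₀ h1]
  have hcoef : (1 - θ) * b + θ * (1 - θ)⁻¹ + θ * b * q = 0 := by
    have hc' : 1 - θ + θ * (q:ℝ) ≠ 0 := by rw [mul_comm θ]; exact hc
    rw [hb]; field_simp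
    have hsum : (1 - θ) / (1 - θ + θ * (q:ℝ)) + θ * q / (1 - θ + θ * (q:ℝ)) = 1 := by
      rw [← add_div, div_self hc']
    rw [mul_zero, ← hsum]; ring
  rw [hcoef, zero_smul, add_zero, one_smul]

end Aux

private lemma aux_main (n q : ℕ) (hn : 1 ≤ n) (hq : 1 ≤ q)
    (R : Matrix (Fin n) (Fin q) ℝ) (θ : ℝ)
    (hθ0 : 0 ≤ θ) (hθ1 : θ < 1) (η : Fin q → ℝ) (hη : ∀ i, 0 < η i) :
    Matrix.trace ((1 / (n : ℝ)) • (Rᵀ * R) *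
        (Matrix.diagonal η *
          ((1 - θ) • 1 + θ • Matrix.of (fun _ _ => (1 : ℝ))) *
          Matrix.diagonal η)⁻¹)
      - Real.log (Matrix.diagonal η *
          ((1 - θ) • 1 + θ • Matrix.of (fun _ _ => (1 : ℝ))) *
          Matrix.diagonal η)⁻¹.det
      = (1 / ((n : ℝ) * (1 - θ))) *
          (∑ i, ∑ j, ((R * Matrix.diagonal (fun i => (η i)⁻¹)) i j) ^ 2)
        - (θ / ((n : ℝ) * (1 - θ) * (1 - θ + (q : ℝ) * θ)))
            * (∑ i, (∑ j, (R * Matrix.diagonal (fun i => (η i)⁻¹)) i j) ^ 2)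
        + ((q : ℝ) - 1) * Real.log (1 - θ) + Real.log (1 + ((q : ℝ) - 1) * θ)
        + 2 * (∑ i, Real.log (η i)) := by
  have h1 : (0:ℝ) < 1 - θ := by linarith
  have hcpos : (0:ℝ) < 1 - θ + (q:ℝ) * θ := by positivity
  have hnpos : (0:ℝ) < (n:ℝ) := by exact_mod_cast hn
  set J : Matrix (Fin q) (Fin q) ℝ := Matrix.of (fun _ _ => (1:ℝ)) with hJdef
  set a : ℝ := (1 - θ)⁻¹ with hadef
  set b : ℝ := -(θ / ((1 - θ) * (1 - θ + (q:ℝ) * θ))) with hbdef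
  set D : Matrix (Fin q) (Fin q) ℝ := Matrix.diagonal η with hDdef
  set Di : Matrix (Fin q) (Fin q) ℝ := Matrix.diagonal (fun i => (η i)⁻¹) with hDidef
  set C : Matrix (Fin q) (Fin q) ℝ := (1 - θ) • 1 + θ • J with hCdef
  set Cinv : Matrix (Fin q) (Fin q) ℝ := a • 1 + b • J with hCinvdef
  set Rs : Matrix (Fin n) (Fin q) ℝ := R * Di with hRsdef
  have hDDi : D * Di = 1 := by
    rw [hDdef, hDidef, Matrix.diagonal_mul_diagonal]
    rw [show (fun i => η i * (η i)⁻¹) = fun _ => (1:ℝ) by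
      funext i; exact mul_inv_cancel₀ (hη i).ne']
    exact Matrix.diagonal_one
  have hDiD : Di * D = 1 := by
    rw [hDdef, hDidef, Matrix.diagonal_mul_diagonal]
    rw [show (fun i => (η i)⁻¹ * η i) = fun _ => (1:ℝ) by
      funext i; exact inv_mul_cancel₀ (hη i).ne']
    exact Matrix.diagonal_one
  have hCC : C * Cinv = 1 := CmulCinv q θ hθ1 hcpos.ne'
  have hright : D * C * D * (Di * Cinv * Di) = 1 := by
    have e1 : D * C * D * (Di * Cinv * Di) = D * C * (D * Di) * (Cinv * Di) := by
      simp only [Matrix.mul_assoc]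
    rw [e1, hDDi, Matrix.mul_one, ← Matrix.mul_assoc, Matrix.mul_assoc D C Cinv,
      hCC, Matrix.mul_one, hDDi]
  have hO : (D * C * D)⁻¹ = Di * Cinv * Di := Matrix.inv_eq_right_inv hright
  -- trace part
  have hRsT : Rsᵀ = Di * Rᵀ := by
    rw [hRsdef, Matrix.transpose_mul, hDidef, Matrix.diagonal_transpose]
  have ht0 : Matrix.trace ((1 / (n : ℝ)) • (Rᵀ * R) * (Di * Cinv * Di))
      = (1 / (n:ℝ)) * (a * Matrix.trace (Rsᵀ * Rs)
          + b * Matrix.trace (Rsᵀ * Rs * J)) := by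
    have e1 : (1 / (n : ℝ)) • (Rᵀ * R) * (Di * Cinv * Di)
        = ((1 / (n : ℝ)) • (Rᵀ * R) * Di) * Cinv * Di := by
      simp only [Matrix.mul_assoc]
    rw [e1, Matrix.trace_mul_cycle]
    have e2 : Di * ((1 / (n : ℝ)) • (Rᵀ * R) * Di) * Cinv
        = ((1 / (n:ℝ)) • (Rsᵀ * Rs)) * Cinv := by
      rw [hRsT, hRsdef]
      simp only [Matrix.smul_mul, Matrix.mul_smul, Matrix.mul_assoc]
    rw [e2, Matrix.smul_mul, Matrix.trace_smul, hCinvdef, Matrix.mul_add,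
      Matrix.mul_smul, Matrix.mul_smul, Matrix.mul_one, Matrix.trace_add,
      Matrix.trace_smul, Matrix.trace_smul]
    simp only [smul_eq_mul]
  have t1 : Matrix.trace (Rsᵀ * Rs) = ∑ i, ∑ j, (Rs i j) ^ 2 := by
    simp only [Matrix.trace, Matrix.diag, Matrix.mul_apply, Matrix.transpose_apply]
    rw [Finset.sum_comm]
    simp [sq]
  have swap3 : ∀ (g : Fin n → Fin q → Fin q → ℝ),
      ∑ jj : Fin q, ∑ kk : Fin q, ∑ ii : Fin n, g ii jj kk
        = ∑ ii : Fin n, ∑ jj : Fin q, ∑ kk : Fin q, g ii jj kk := by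
    intro g
    calc ∑ jj : Fin q, ∑ kk : Fin q, ∑ ii : Fin n, g ii jj kk
        = ∑ jj : Fin q, ∑ ii : Fin n, ∑ kk : Fin q, g ii jj kk :=
          Finset.sum_congr rfl (fun jj _ => Finset.sum_comm)
      _ = ∑ ii : Fin n, ∑ jj : Fin q, ∑ kk : Fin q, g ii jj kk := Finset.sum_comm
  have t2 : Matrix.trace (Rsᵀ * Rs * J) = ∑ i, (∑ j, Rs i j) ^ 2 := by
    have rhs : ∀ i : Fin n, (∑ j, Rs i j) ^ 2 = ∑ j : Fin q, ∑ k : Fin q, Rs i j * Rs i k := by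
      intro i; rw [sq, Finset.sum_mul_sum]
    simp only [Matrix.trace, Matrix.diag, Matrix.mul_apply, Matrix.transpose_apply,
      hJdef, Matrix.of_apply, mul_one, rhs]
    rw [← swap3 (fun ii jj kk => Rs ii jj * Rs ii kk)]
  -- det part
  have hdetC : C.det = (1 - θ) ^ (q - 1) * (1 - θ + (q:ℝ) * θ) := by
    have hCeq : C = (1 - θ) •
        (1 + Matrix.replicateCol Unit (fun _ => θ / (1 - θ)) * Matrix.replicateRow Unit (fun _ => (1:ℝ))) := by
      rw [hCdef, hJdef]
      ext i j
      by_cases h : i = j <;>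
        simp [Matrix.one_apply, h, Matrix.mul_apply, Matrix.replicateCol_apply, Matrix.replicateRow_apply,
          Matrix.smul_apply, Matrix.add_apply, smul_eq_mul] <;>
        field_simp <;> ring
    rw [hCeq, Matrix.det_smul, Matrix.det_one_add_replicateCol_mul_replicateRow]
    have : ((fun _ => (1:ℝ)) : Fin q → ℝ) ⬝ᵥ ((fun _ => θ / (1 - θ)) : Fin q → ℝ) = (q:ℝ) * (θ / (1 - θ)) := by
      simp [dotProduct]
    rw [this]
    have hq' : (1 - θ) ^ q = (1 - θ) ^ (q - 1) * (1 - θ) := by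
      rw [← pow_succ, Nat.sub_add_cancel hq]
    rw [Fintype.card_fin, hq']
    field_simp
  have hdetS : (D * C * D).det = (∏ i, η i) ^ 2 * ((1 - θ) ^ (q - 1) * (1 - θ + (q:ℝ) * θ)) := by
    rw [Matrix.det_mul, Matrix.det_mul, hDdef, Matrix.det_diagonal, hdetC]
    ring
  have hprodpos : (0:ℝ) < ∏ i, η i := Finset.prod_pos fun i _ => hη i
  have hdetSpos : (0:ℝ) < (D * C * D).det := by
    rw [hdetS]; positivity
  have hlog : Real.log ((D * C * D)⁻¹).det
      = -(2 * (∑ i, Real.log (η i)) + ((q:ℝ) - 1) * Real.log (1 - θ)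
          + Real.log (1 - θ + (q:ℝ) * θ)) := by
    rw [Matrix.det_nonsing_inv, Ring.inverse_eq_inv', Real.log_inv]
    congr 1
    rw [hdetS, Real.log_mul (by positivity) (by positivity),
      Real.log_mul (by positivity) hcpos.ne', Real.log_pow, Real.log_pow,
      Real.log_prod (fun i _ => (hη i).ne')]
    have : ((q - 1 : ℕ) : ℝ) = (q:ℝ) - 1 := by
      rw [Nat.cast_sub hq]; norm_num
    rw [this]
    push_cast
    ring
  -- combine
  rw [hlog, hO, ht0, t1, t2]
  have hc1 : 1 / ((n:ℝ) * (1 - θ)) = (1 / (n:ℝ)) * a := by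
    rw [hadef]; field_simp
  have hc2 : θ / ((n:ℝ) * (1 - θ) * (1 - θ + (q:ℝ) * θ)) = -((1 / (n:ℝ)) * b) := by
    rw [hbdef]; field_simp
  have hc3 : (1:ℝ) + ((q:ℝ) - 1) * θ = 1 - θ + (q:ℝ) * θ := by ring
  rw [hc1, hc2, hc3]
  ring


/-- The negative Gaussian log-likelihood with generalized compound symmetry
precision matrix `Ω = Σ⁻¹`, `Σ = diag(η)C diag(η)`, equals the explicit expression
in terms of the rescaled residuals. -/
theorem neg_loglik_general_compound_symmetry (n p q : ℕ)
    (hn : 1 ≤ n) (hp : 1 ≤ p) (hq : 1 ≤ q)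
    (Y : Matrix (Fin n) (Fin q) ℝ) (X : Matrix (Fin n) (Fin p) ℝ)
    (B : Matrix (Fin p) (Fin q) ℝ) (θ : ℝ)
    (hθ0 : 0 ≤ θ) (hθ1 : θ < 1) (η : Fin q → ℝ) (hη : ∀ i, 0 < η i) :
    let S : Matrix (Fin q) (Fin q) ℝ :=
      Matrix.diagonal η *
        ((1 - θ) • 1 + θ • Matrix.of (fun _ _ => (1 : ℝ))) *
        Matrix.diagonal η;
    let O : Matrix (Fin q) (Fin q) ℝ := S⁻¹;
    let R : Matrix (Fin n) (Fin q) ℝ := Y - X * B;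
    let Rs : Matrix (Fin n) (Fin q) ℝ := R * Matrix.diagonal (fun i => (η i)⁻¹);
    Matrix.trace ((1 / (n : ℝ)) • (Rᵀ * R) * O) - Real.log O.det
      = (1 / ((n : ℝ) * (1 - θ))) * (∑ i, ∑ j, (Rs i j) ^ 2)
        - (θ / ((n : ℝ) * (1 - θ) * (1 - θ + (q : ℝ) * θ)))
            * (∑ i, (∑ j, Rs i j) ^ 2)
        + ((q : ℝ) - 1) * Real.log (1 - θ) + Real.log (1 + ((q : ℝ) - 1) * θ)
        + 2 * (∑ i, Real.log (η i)) := by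
  intro S O R Rs
  exact aux_main n q hn hq (Y - X * B) θ hθ0 hθ1 η hη
end

section
/- Let q ≥ 2 be an integer and M₁, M₂ ≥ 0 with q·M₁ ≥ M₂. Define α̂ = (q·M₁ − M₂)/(q(q−1)), γ̂ = max{α̂, M₂/q}, η̂² = ((q−1)·α̂ + γ̂)/q, and δ̂ = M₁/q. Then q·|δ̂ − η̂²| ≤ |M₂/q − α̂|, and |M₂/q − α̂| = |M₂ − M₁|/(q−1); consequently |δ̂ − η̂²| ≤ |M₂ − M₁|/(q(q−1)). -/
/-- Bounds on the gap between the recovered variance estimate `η̂²` and the naive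
variance estimate `δ̂`: `q|δ̂ − η̂²| ≤ |M₂/q − α̂|`, `|M₂/q − α̂| = |M₂−M₁|/(q−1)`,
hence `|δ̂ − η̂²| ≤ |M₂−M₁|/(q(q−1))`. -/
theorem eta_delta_gap_bound (q : ℕ) (hq : 2 ≤ q) (M₁ M₂ : ℝ)
    (h1 : 0 ≤ M₁) (h2 : 0 ≤ M₂) (h : M₂ ≤ (q : ℝ) * M₁) :
    let αh : ℝ := ((q : ℝ) * M₁ - M₂) / ((q : ℝ) * ((q : ℝ) - 1));
    let γh : ℝ := max αh (M₂ / (q : ℝ));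
    let ηh2 : ℝ := (((q : ℝ) - 1) * αh + γh) / (q : ℝ);
    let δh : ℝ := M₁ / (q : ℝ);
    (q : ℝ) * |δh - ηh2| ≤ |M₂ / (q : ℝ) - αh| ∧
    |M₂ / (q : ℝ) - αh| = |M₂ - M₁| / ((q : ℝ) - 1) ∧
    |δh - ηh2| ≤ |M₂ - M₁| / ((q : ℝ) * ((q : ℝ) - 1)) := by
  intro αh γh ηh2 δh
  have hq2 : (2 : ℝ) ≤ (q : ℝ) := by exact_mod_cast hq
  have hq0 : (0 : ℝ) < (q : ℝ) := by linarith
  have hq1 : (0 : ℝ) < (q : ℝ) - 1 := by linarith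
  have hqq : (0 : ℝ) < (q : ℝ) * ((q : ℝ) - 1) := mul_pos hq0 hq1
  -- key identity: (q-1)*αh = M₁ - M₂/q
  have hα : ((q : ℝ) - 1) * αh = M₁ - M₂ / (q : ℝ) := by
    show ((q : ℝ) - 1) * (((q : ℝ) * M₁ - M₂) / ((q : ℝ) * ((q : ℝ) - 1))) = _
    field_simp
  have hδ : δh - ηh2 = (M₂ / (q : ℝ) - γh) / (q : ℝ) := by
    show M₁ / (q : ℝ) - (((q : ℝ) - 1) * αh + γh) / (q : ℝ) = _
    rw [hα]; ring
  have key : (q : ℝ) * |δh - ηh2| = |M₂ / (q : ℝ) - γh| := by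
    rw [hδ, abs_div, abs_of_pos hq0]
    field_simp
  have h1' : (q : ℝ) * |δh - ηh2| ≤ |M₂ / (q : ℝ) - αh| := by
    rw [key]
    rcases le_total αh (M₂ / (q : ℝ)) with hc | hc
    · have : γh = M₂ / (q : ℝ) := max_eq_right hc
      rw [this]; simp [abs_nonneg]
    · have : γh = αh := max_eq_left hc
      rw [this]
  have h2' : |M₂ / (q : ℝ) - αh| = |M₂ - M₁| / ((q : ℝ) - 1) := by
    have : M₂ / (q : ℝ) - αh = (M₂ - M₁) / ((q : ℝ) - 1) := by
      show M₂ / (q : ℝ) - ((q : ℝ) * M₁ - M₂) / ((q : ℝ) * ((q : ℝ) - 1)) = _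
      field_simp
      ring
    rw [this, abs_div, abs_of_pos hq1]
  refine ⟨h1', h2', ?_⟩
  have := h1'
  rw [h2'] at this
  calc |δh - ηh2| = ((q : ℝ) * |δh - ηh2|) / (q : ℝ) := by field_simp
    _ ≤ (|M₂ - M₁| / ((q : ℝ) - 1)) / (q : ℝ) := by
        gcongr
    _ = |M₂ - M₁| / ((q : ℝ) * ((q : ℝ) - 1)) := by rw [div_div, mul_comm]
end

section
/- Let q ≥ 2 be an integer, η*² > 0 and θ* ∈ [0,1), and let Σ* = η*²((1−θ*)·I_q + θ*·1_q 1_qᵀ). Let (E_i)_{i≥1} be a sequence of independent, identically distributed random vectors in ℝ^q with mean zero, covariance matrix Σ*, and 𝔼‖E₁‖² < ∞. For each n define M₁ⁿ = (1/n)∑_{i=1}^n ‖E_i‖², M₂ⁿ = (1/n)∑_{i=1}^n (1_qᵀ E_i)², α̂ₙ = (q·M₁ⁿ − M₂ⁿ)/(q(q−1)), γ̂ₙ = max{α̂ₙ, M₂ⁿ/q}, η̂ₙ² = ((q−1)·α̂ₙ + γ̂ₙ)/q, and θ̂ₙ = (γ̂ₙ − α̂ₙ)/(γ̂ₙ + (q−1)·α̂ₙ).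 Then almost surely, as n → ∞, α̂ₙ → η*²(1−θ*), M₂ⁿ/q → η*²(1+(q−1)θ*), η̂ₙ² → η*², and θ̂ₙ → θ*. -/
open MeasureTheory Filter

open ProbabilityTheory Finset

/-- Strong consistency of the closed-form compound symmetry estimators: for an iid
sequence of mean-zero errors with covariance `Σ* = η*²((1−θ*)I + θ*11ᵀ)` and
finite second moment, almost surely `α̂ₙ → η*²(1−θ*)`, `M₂ⁿ/q → η*²(1+(q−1)θ*)`,
`η̂ₙ² → η*²`, and `θ̂ₙ → θ*`. -/
theorem strong_consistency_compound_symmetry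
    {W : Type*} [MeasurableSpace W] (μ : Measure W) [IsProbabilityMeasure μ]
    (q : ℕ) (hq : 2 ≤ q) (η2 θ : ℝ) (hη : 0 < η2) (hθ0 : 0 ≤ θ) (hθ1 : θ < 1)
    (E : ℕ → W → Fin q → ℝ)
    (hmeas : ∀ i, Measurable (E i))
    (hindep : ProbabilityTheory.iIndepFun E μ)
    (hident : ∀ i, ProbabilityTheory.IdentDistrib (E i) (E 0) μ μ)
    (hmean : ∀ j, ∫ ω, E 0 ω j ∂μ = 0)
    (hcov : ∀ j k, ∫ ω, E 0 ω j * E 0 ω k ∂μ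
      = ((η2 • ((1 - θ) • 1 + θ • Matrix.of (fun _ _ => (1 : ℝ)))
          : Matrix (Fin q) (Fin q) ℝ) j k))
    (hL2 : Integrable (fun ω => ∑ j, (E 0 ω j) ^ 2) μ) :
    let M₁ : ℕ → W → ℝ := fun n ω =>
      (1 / (n : ℝ)) * ∑ i ∈ Finset.range n, ∑ j, (E i ω j) ^ 2;
    let M₂ : ℕ → W → ℝ := fun n ω =>
      (1 / (n : ℝ)) * ∑ i ∈ Finset.range n, (∑ j, E i ω j) ^ 2;
    let αh : ℕ → W → ℝ := fun n ω =>
      ((q : ℝ) * M₁ n ω - M₂ n ω) / ((q : ℝ) * ((q : ℝ) - 1));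
    let γh : ℕ → W → ℝ := fun n ω => max (αh n ω) (M₂ n ω / (q : ℝ));
    let ηh2 : ℕ → W → ℝ := fun n ω => (((q : ℝ) - 1) * αh n ω + γh n ω) / (q : ℝ);
    let θh : ℕ → W → ℝ := fun n ω =>
      (γh n ω - αh n ω) / (γh n ω + ((q : ℝ) - 1) * αh n ω);
    ∀ᵐ ω ∂μ,
      Tendsto (fun n => αh n ω) atTop (nhds (η2 * (1 - θ))) ∧
      Tendsto (fun n => M₂ n ω / (q : ℝ)) atTop (nhds (η2 * (1 + ((q : ℝ) - 1) * θ))) ∧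
      Tendsto (fun n => ηh2 n ω) atTop (nhds η2) ∧
      Tendsto (fun n => θh n ω) atTop (nhds θ) := by
  intro M₁ M₂ αh γh ηh2 θh
  have hq1 : (1:ℝ) ≤ (q:ℝ) - 1 := by
    have : (2:ℝ) ≤ q := by exact_mod_cast hq
    linarith
  have hqpos : (0:ℝ) < q := by linarith
  have hq0 : (q:ℝ) ≠ 0 := ne_of_gt hqpos
  have hq1' : (q:ℝ) - 1 ≠ 0 := by linarith
  -- diagonal / off-diagonal covariances
  have hdiag : ∀ j, ∫ ω, E 0 ω j * E 0 ω j ∂μ = η2 := by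
    intro j
    rw [hcov j j]
    simp [Matrix.smul_apply, Matrix.add_apply, Matrix.one_apply]
  have hoff : ∀ j k, j ≠ k → ∫ ω, E 0 ω j * E 0 ω k ∂μ = η2 * θ := by
    intro j k hjk
    rw [hcov j k]
    simp [Matrix.smul_apply, Matrix.add_apply, Matrix.one_apply, hjk]
  -- measurability of component maps
  have hfmeas : Measurable (fun x : Fin q → ℝ => ∑ j, (x j) ^ 2) := by fun_prop
  have hgmeas : Measurable (fun x : Fin q → ℝ => (∑ j, x j) ^ 2) := by fun_prop
  -- integrability of products
  have hprod : ∀ j k, Integrable (fun ω => E 0 ω j * E 0 ω k) μ := by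
    intro j k
    refine (hL2.const_mul 2).mono' ?_ ?_
    · exact (((measurable_pi_apply j).comp (hmeas 0)).mul
        ((measurable_pi_apply k).comp (hmeas 0))).aestronglyMeasurable
    · filter_upwards with ω
      have h1 : (E 0 ω j) ^ 2 ≤ ∑ l, (E 0 ω l) ^ 2 :=
        Finset.single_le_sum (f := fun l => (E 0 ω l) ^ 2) (fun l _ => sq_nonneg _) (mem_univ j)
      have h2 : (E 0 ω k) ^ 2 ≤ ∑ l, (E 0 ω l) ^ 2 :=
        Finset.single_le_sum (f := fun l => (E 0 ω l) ^ 2) (fun l _ => sq_nonneg _) (mem_univ k)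
      have : |E 0 ω j * E 0 ω k| ≤ (E 0 ω j)^2 + (E 0 ω k)^2 := by
        rw [abs_mul]
        nlinarith [sq_nonneg (|E 0 ω j| - |E 0 ω k|), sq_abs (E 0 ω j), sq_abs (E 0 ω k),
          abs_nonneg (E 0 ω j), abs_nonneg (E 0 ω k)]
      calc ‖E 0 ω j * E 0 ω k‖ = |E 0 ω j * E 0 ω k| := rfl
        _ ≤ (E 0 ω j)^2 + (E 0 ω k)^2 := this
        _ ≤ 2 * ∑ l, (E 0 ω l) ^ 2 := by linarith
  -- integrability of the squared sum
  have hT0 : Integrable (fun ω => (∑ j, E 0 ω j) ^ 2) μ := by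
    refine (hL2.const_mul q).mono' ?_ ?_
    · exact (hgmeas.comp (hmeas 0)).aestronglyMeasurable
    · filter_upwards with ω
      have := sq_sum_le_card_mul_sum_sq (s := (univ : Finset (Fin q)))
        (f := fun j => E 0 ω j)
      simp only [Finset.card_univ, Fintype.card_fin] at this
      calc ‖(∑ j, E 0 ω j) ^ 2‖ = (∑ j, E 0 ω j) ^ 2 := by
            rw [Real.norm_eq_abs, abs_of_nonneg (sq_nonneg _)]
        _ ≤ (q : ℝ) * ∑ j, (E 0 ω j) ^ 2 := this
  -- expectations
  have hm1 : ∫ ω, (∑ j, (E 0 ω j) ^ 2) ∂μ = (q : ℝ) * η2 := by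
    rw [integral_finset_sum _ (fun j _ => by
      simpa [sq] using hprod j j)]
    have : ∀ j : Fin q, ∫ ω, (E 0 ω j) ^ 2 ∂μ = η2 := fun j => by
      simpa [sq] using hdiag j
    simp [this, Finset.card_univ]
  have hrowsum : ∀ j : Fin q, ∑ k, ∫ ω, E 0 ω j * E 0 ω k ∂μ
      = η2 + ((q:ℝ) - 1) * (η2 * θ) := by
    intro j
    rw [← Finset.add_sum_erase _ _ (mem_univ j), hdiag j,
      Finset.sum_congr rfl (fun k hk => hoff j k (Ne.symm (Finset.ne_of_mem_erase hk))),
      Finset.sum_const, Finset.card_erase_of_mem (mem_univ j), Finset.card_univ,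
      Fintype.card_fin, nsmul_eq_mul, Nat.cast_sub (by omega : 1 ≤ q)]
    push_cast
    ring
  have hm2 : ∫ ω, ((∑ j, E 0 ω j) ^ 2) ∂μ = (q : ℝ) * η2 * (1 + ((q:ℝ) - 1) * θ) := by
    have hexp : ∀ ω, (∑ j, E 0 ω j) ^ 2 = ∑ j, ∑ k, E 0 ω j * E 0 ω k := by
      intro ω; rw [sq, Finset.sum_mul_sum]
    simp only [hexp]
    rw [integral_finset_sum _ (fun j _ =>
      integrable_finset_sum _ (fun k _ => hprod j k))]
    rw [Finset.sum_congr rfl (fun j _ => by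
      rw [integral_finset_sum _ (fun k _ => hprod j k), hrowsum j])]
    simp [Finset.card_univ]
    ring
  -- SLLN for M₁
  have hA := ProbabilityTheory.strong_law_ae_real (μ := μ)
    (fun i ω => ∑ j, (E i ω j) ^ 2) hL2
    (fun i j hij => ((hindep.indepFun hij).comp hfmeas hfmeas))
    (fun i => (hident i).comp hfmeas)
  have hB := ProbabilityTheory.strong_law_ae_real (μ := μ)
    (fun i ω => (∑ j, E i ω j) ^ 2) hT0
    (fun i j hij => ((hindep.indepFun hij).comp hgmeas hgmeas))
    (fun i => (hident i).comp hgmeas)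
  rw [hm1] at hA
  rw [hm2] at hB
  filter_upwards [hA, hB] with ω hA hB
  have hM₁ : Tendsto (fun n : ℕ => (1 / (n : ℝ)) * ∑ i ∈ Finset.range n, ∑ j, (E i ω j) ^ 2)
      atTop (nhds ((q : ℝ) * η2)) :=
    hA.congr (fun n => by rw [one_div, inv_mul_eq_div])
  have hM₂ : Tendsto (fun n : ℕ => (1 / (n : ℝ)) * ∑ i ∈ Finset.range n, (∑ j, E i ω j) ^ 2)
      atTop (nhds ((q : ℝ) * η2 * (1 + ((q:ℝ) - 1) * θ))) :=
    hB.congr (fun n => by rw [one_div, inv_mul_eq_div])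
  have hα : Tendsto (fun n => αh n ω) atTop (nhds (η2 * (1 - θ))) := by
    have := ((hM₁.const_mul (q:ℝ)).sub hM₂).div_const ((q:ℝ) * ((q:ℝ) - 1))
    have heq : ((q:ℝ) * ((q : ℝ) * η2) - (q : ℝ) * η2 * (1 + ((q:ℝ) - 1) * θ))
        / ((q:ℝ) * ((q:ℝ) - 1)) = η2 * (1 - θ) := by
      field_simp
      ring
    rw [heq] at this
    exact this
  have hM₂q : Tendsto (fun n => M₂ n ω / (q : ℝ)) atTop
      (nhds (η2 * (1 + ((q:ℝ) - 1) * θ))) := by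
    have := hM₂.div_const (q:ℝ)
    have heq : (q : ℝ) * η2 * (1 + ((q:ℝ) - 1) * θ) / (q:ℝ)
        = η2 * (1 + ((q:ℝ) - 1) * θ) := by
      field_simp
    rw [heq] at this
    exact this
  have hle : η2 * (1 - θ) ≤ η2 * (1 + ((q:ℝ) - 1) * θ) := by nlinarith [mul_nonneg (mul_nonneg hη.le hθ0) hqpos.le]
  have hγ : Tendsto (fun n => γh n ω) atTop (nhds (η2 * (1 + ((q:ℝ) - 1) * θ))) := by
    have := hα.max hM₂q
    rwa [max_eq_right hle] at this
  refine ⟨hα, hM₂q, ?_, ?_⟩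
  · have := ((hα.const_mul ((q:ℝ) - 1)).add hγ).div_const (q:ℝ)
    have heq : (((q:ℝ) - 1) * (η2 * (1 - θ)) + η2 * (1 + ((q:ℝ) - 1) * θ)) / (q:ℝ)
        = η2 := by
      field_simp
      ring
    rwa [heq] at this
  · have hden : η2 * (1 + ((q:ℝ) - 1) * θ) + ((q:ℝ) - 1) * (η2 * (1 - θ))
        = η2 * (q:ℝ) := by ring
    have hdenne : η2 * (1 + ((q:ℝ) - 1) * θ) + ((q:ℝ) - 1) * (η2 * (1 - θ)) ≠ 0 := by
      rw [hden]
      positivity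
    have := (hγ.sub hα).div (hγ.add (hα.const_mul ((q:ℝ) - 1))) hdenne
    have heq : (η2 * (1 + ((q:ℝ) - 1) * θ) - η2 * (1 - θ))
        / (η2 * (1 + ((q:ℝ) - 1) * θ) + ((q:ℝ) - 1) * (η2 * (1 - θ))) = θ := by
      rw [hden]
      rw [div_eq_iff (by positivity)]
      ring
    rwa [heq] at this
end
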